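/- Two closed monitors m and n are ω-verdict equivalent if and only if the symmetric difference of their acceptance languages together with the symmetric difference of their rejection languages, (L_a(m) Δ L_a(n)) ∪ (L_r(m) Δ L_r(n)), is a finite set of finite traces. -/

import Mathlib

/-- Recursion-free regular monitors (with variables). -/
inductive Mon (Act : Type) : Type
  | end_ : Mon Act
  | yes : Mon Act
  | no : Mon Act
  | act : Act → Mon Act → Mon Act
  | plus : Mon Act → Mon Act → Mon Act
  | var : ℕ → Mon Act

variable {Act : Type}

/-- Verdicts: `end`, `yes`, `no`. -/
inductive IsVerdict : Mon Act → Prop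
  | end_ : IsVerdict Mon.end_
  | yes : IsVerdict Mon.yes
  | no : IsVerdict Mon.no

/-- Labelled transition relation; `none` is the silent action τ. -/
inductive Step : Mon Act → Option Act → Mon Act → Prop
  | act (a : Act) (m : Mon Act) : Step (Mon.act a m) (some a) m
  | plusL {m n m' : Mon Act} {α : Option Act} : Step m α m' → Step (Mon.plus m n) α m'
  | plusR {m n n' : Mon Act} {α : Option Act} : Step n α n' → Step (Mon.plus m n) α n'
  | verdict {v : Mon Act} {α : Option Act} : IsVerdict v → Step v α v

/-- Reflexive-transitive closure of τ-steps. -/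
def TauStar (m n : Mon Act) : Prop :=
  Relation.ReflTransGen (fun p q => Step p none q) m n

/-- Strong transition along a finite trace. -/
inductive Trace : Mon Act → List Act → Mon Act → Prop
  | refl (m : Mon Act) : Trace m [] m
  | cons {m m' m'' : Mon Act} {a : Act} {s : List Act} :
      Step m (some a) m' → Trace m' s m'' → Trace m (a :: s) m''

/-- Weak transition along a finite trace (τ-steps allowed throughout). -/
inductive WTrace : Mon Act → List Act → Mon Act → Prop
  | nil {m m' : Mon Act} : TauStar m m' → WTrace m [] m'
  | cons {m m₁ m₂ m' : Mon Act} {a : Act} {s : List Act} :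
      TauStar m m₁ → Step m₁ (some a) m₂ → WTrace m₂ s m' → WTrace m (a :: s) m'

/-- Acceptance language. -/
def La (m : Mon Act) : Set (List Act) := {s | WTrace m s Mon.yes}

/-- Rejection language. -/
def Lr (m : Mon Act) : Set (List Act) := {s | WTrace m s Mon.no}

/-- Verdict equivalence. -/
def VerdEq (m n : Mon Act) : Prop := La m = La n ∧ Lr m = Lr n

/-- `A · Act^ω`: infinite words having a finite prefix in `A`. -/
def omegaCl (A : Set (List Act)) : Set (ℕ → Act) :=
  {w | ∃ n : ℕ, (List.range n).map w ∈ A}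

/-- ω-verdict equivalence. -/
def OmegaEq (m n : Mon Act) : Prop :=
  omegaCl (La m) = omegaCl (La n) ∧ omegaCl (Lr m) = omegaCl (Lr n)

/-- Closed monitors: no variables. -/
def Closed : Mon Act → Prop
  | Mon.act _ m => Closed m
  | Mon.plus m n => Closed m ∧ Closed n
  | Mon.var _ => False
  | _ => True

/-- `yes` occurs as a subterm. -/
def HasYes : Mon Act → Prop
  | Mon.yes => True
  | Mon.act _ m => HasYes m
  | Mon.plus m n => HasYes m ∨ HasYes n
  | _ => False

/-- `no` occurs as a subterm. -/
def HasNo : Mon Act → Prop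
  | Mon.no => True
  | Mon.act _ m => HasNo m
  | Mon.plus m n => HasNo m ∨ HasNo n
  | _ => False

/-- Syntactic depth. -/
def depth : Mon Act → ℕ
  | Mon.act _ m => depth m + 1
  | Mon.plus m n => max (depth m) (depth n)
  | _ => 0

/-- Applying a substitution. -/
def msubst (σ : ℕ → Mon Act) : Mon Act → Mon Act
  | Mon.var x => σ x
  | Mon.act a m => Mon.act a (msubst σ m)
  | Mon.plus m n => Mon.plus (msubst σ m) (msubst σ n)
  | m => m

/-- Equational derivability from an axiom set `E`. -/
inductive Deriv (E : Mon Act → Mon Act → Prop) : Mon Act → Mon Act → Prop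
  | ax {m n} : E m n → Deriv E m n
  | refl (m) : Deriv E m m
  | symm {m n} : Deriv E m n → Deriv E n m
  | trans {m n p} : Deriv E m n → Deriv E n p → Deriv E m p
  | act (a : Act) {m n} : Deriv E m n → Deriv E (Mon.act a m) (Mon.act a n)
  | plus {m m' n n'} : Deriv E m m' → Deriv E n n' → Deriv E (Mon.plus m n) (Mon.plus m' n')
  | subst (σ : ℕ → Mon Act) {m n} : Deriv E m n → Deriv E (msubst σ m) (msubst σ n)

def vx : Mon Act := Mon.var 0
def vy : Mon Act := Mon.var 1
def vz : Mon Act := Mon.var 2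

/-- The axiom system `E_v`. -/
inductive EvAx : Mon Act → Mon Act → Prop
  | A1 : EvAx (Mon.plus vx vy) (Mon.plus vy vx)
  | A2 : EvAx (Mon.plus vx (Mon.plus vy vz)) (Mon.plus (Mon.plus vx vy) vz)
  | A3 : EvAx (Mon.plus vx vx) vx
  | A4 : EvAx (Mon.plus vx Mon.end_) vx
  | Ea (a : Act) : EvAx (Mon.act a Mon.end_) Mon.end_
  | Ya (a : Act) : EvAx Mon.yes (Mon.plus Mon.yes (Mon.act a Mon.yes))
  | Na (a : Act) : EvAx Mon.no (Mon.plus Mon.no (Mon.act a Mon.no))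
  | Da (a : Act) : EvAx (Mon.act a (Mon.plus vx vy)) (Mon.plus (Mon.act a vx) (Mon.act a vy))

/-- Sum of a list of monitors (`end` for the empty sum). -/
def sumList : List (Mon Act) → Mon Act
  | [] => Mon.end_
  | [m] => m
  | m :: ms => Mon.plus m (sumList ms)

/-- `s.m`: the monitor performing exactly the actions of `s` and then behaving as `m`. -/
def prefixMon (s : List Act) (m : Mon Act) : Mon Act :=
  List.foldr Mon.act m s

/-- Build `Σ_{(a,m)∈l} a.m [+ yes] [+ no]`. -/
def buildNF (l : List (Act × Mon Act)) (hy hn : Bool) : Mon Act :=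
  sumList (l.map (fun p => Mon.act p.1 p.2) ++
    (if hy then [Mon.yes] else []) ++ (if hn then [Mon.no] else []))

/-- Normal forms for closed monitors. -/
inductive NF : Mon Act → Prop
  | mk (l : List (Act × Mon Act)) (hy hn : Bool) :
      (l.map Prod.fst).Nodup →
      (∀ p ∈ l, p.2 ≠ Mon.end_) →
      (∀ p ∈ l, NF p.2) →
      NF (buildNF l hy hn)

/-- Build `Σ_{(a,m)∈l} a.m + Σ_{x∈vs} x [+ yes] [+ no]`. -/
def buildONF (l : List (Act × Mon Act)) (vs : List ℕ) (hy hn : Bool) : Mon Act :=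
  sumList (l.map (fun p => Mon.act p.1 p.2) ++ vs.map Mon.var ++
    (if hy then [Mon.yes] else []) ++ (if hn then [Mon.no] else []))

/-- Open normal forms. -/
inductive ONF : Mon Act → Prop
  | mk (l : List (Act × Mon Act)) (vs : List ℕ) (hy hn : Bool) :
      (l.map Prod.fst).Nodup → vs.Nodup →
      (∀ p ∈ l, p.2 ≠ Mon.end_) →
      (∀ p ∈ l, ONF p.2) →
      ONF (buildONF l vs hy hn)

/-- `s^i`: the `i`-fold concatenation of `s`. -/
def spow (s : List Act) (i : ℕ) : List Act := (List.replicate i s).flatten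

/-- All traces of length exactly `n` over the alphabet listed by `L`. -/
def tuples (L : List Act) : ℕ → List (List Act)
  | 0 => [[]]
  | n + 1 => (tuples L n).flatMap (fun t => L.map (fun a => a :: t))

/-- All traces of length at most `n`. -/
def allUpTo (L : List Act) (n : ℕ) : List (List Act) :=
  (List.range (n + 1)).flatMap (tuples L)

/-- `s̄^≤(m)`: sum of `s'.m` over traces `s'` with `|s'| ≤ |s|` that are not prefixes of `s`. -/
def sbarLe [DecidableEq Act] (L : List Act) (s : List Act) (m : Mon Act) : Mon Act :=
  sumList (((allUpTo L s.length).filter (fun t => !(t.isPrefixOf s))).map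
    (fun t => prefixMon t m))

/-- `s̄(m) = s̄^≤(m) + s.Σ_{a∈Act} a.m`. -/
def sbar [DecidableEq Act] (L : List Act) (s : List Act) (m : Mon Act) : Mon Act :=
  Mon.plus (sbarLe L s m) (prefixMon s (sumList (L.map fun a => Mon.act a m)))

/-- `s̄^(k)(m)`. -/
def sbarK [DecidableEq Act] (L : List Act) (s : List Act) (m : Mon Act) : ℕ → Mon Act
  | 0 => sbar L s m
  | 1 => sbar L s m
  | k + 2 =>
      Mon.plus
        (sumList ((List.range k).map (fun i => prefixMon (spow s (i + 1)) (sbarLe L s m))))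
        (prefixMon (spow s (k + 1)) (sbar L s m))

section Aux

private lemma step_none_verdict : ∀ {p q : Mon Act} {α}, Step p α q → α = none → IsVerdict q := by
  intro p q α h
  induction h with
  | act a m => intro h; cases h
  | plusL _ ih => exact ih
  | plusR _ ih => exact ih
  | verdict hv => intro _; exact hv

private lemma verdict_step {p q : Mon Act} {α} (hv : IsVerdict p) (h : Step p α q) : q = p := by
  cases hv <;> cases h <;> rfl

private lemma verdict_tauStar {p q : Mon Act} (hv : IsVerdict p) (h : TauStar p q) : q = p := by
  induction h with
  | refl => rfl
  | tail _ h₂ ih => subst ih; exact verdict_step hv h₂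

private lemma tauStar_cases {p q : Mon Act} (h : TauStar p q) : q = p ∨ IsVerdict q := by
  induction h with
  | refl => exact Or.inl rfl
  | tail _ h₂ _ => exact Or.inr (step_none_verdict h₂ rfl)

private lemma wtrace_verdict : ∀ {p v : Mon Act} {s}, WTrace p s v → IsVerdict p → v = p := by
  intro p v s h
  induction h with
  | nil ht => intro hp; exact verdict_tauStar hp ht
  | cons ht hs _ ih =>
    intro hp
    have h1 := verdict_tauStar hp ht
    subst h1
    have h2 := verdict_step hp hs
    subst h2
    exact ih hp

private lemma tauStar_wtrace {v : Mon Act} (hv : IsVerdict v) :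
    ∀ (t : List Act) {m}, TauStar m v → WTrace m t v
  | [], _, h => WTrace.nil h
  | _ :: t, _, h =>
    WTrace.cons h (Step.verdict hv) (tauStar_wtrace hv t Relation.ReflTransGen.refl)

private lemma wtrace_append {v : Mon Act} (hv : IsVerdict v) :
    ∀ {m s} (r : List Act), WTrace m s v → WTrace m (s ++ r) v := by
  intro m s r h
  induction h with
  | nil ht => simpa using tauStar_wtrace hv r ht
  | cons ht hs _ ih => exact WTrace.cons ht hs (ih hv)

private lemma wtrace_prefix {v : Mon Act} (hv : IsVerdict v) {m : Mon Act} {s t : List Act}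
    (h : WTrace m s v) (hp : s <+: t) : WTrace m t v := by
  obtain ⟨r, rfl⟩ := hp
  exact wtrace_append hv r h

private lemma step_some_depth : ∀ {m m' : Mon Act} {α}, Step m α m' → (∃ a, α = some a) →
    depth m' < depth m ∨ Step m none m' := by
  intro m m' α h
  induction h with
  | act a m => intro _; left; simp [depth]
  | plusL h ih =>
    intro ha
    rcases ih ha with h1 | h1
    · left; exact lt_of_lt_of_le h1 (le_max_left _ _)
    · right; exact Step.plusL h1
  | plusR h ih =>
    intro ha
    rcases ih ha with h1 | h1
    · left; exact lt_of_lt_of_le h1 (le_max_right _ _)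
    · right; exact Step.plusR h1
  | verdict hv => intro _; right; exact Step.verdict hv

private lemma wtrace_take {v : Mon Act} (hv : IsVerdict v) :
    ∀ (s : List Act) (m : Mon Act), WTrace m s v → WTrace m (s.take (depth m)) v := by
  intro s
  induction s with
  | nil => intro m h; simpa using h
  | cons a s ih =>
    intro m h
    cases h with
    | cons ht hs hw =>
      rename_i m₁ m₂
      rcases tauStar_cases ht with heq | hver
      · rw [heq] at hs
        rcases step_some_depth hs ⟨a, rfl⟩ with hd | hτ
        · obtain ⟨d', hd'⟩ : ∃ d', depth m = d' + 1 := ⟨depth m - 1, by omega⟩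
          have h1 := ih m₂ hw
          have h2 : WTrace m₂ (s.take d') v := by
            refine wtrace_prefix hv h1 ?_
            have heq : (s.take d').take (depth m₂) = s.take (depth m₂) := by
              rw [List.take_take]; congr 1; omega
            rw [← heq]; exact List.take_prefix _ _
          rw [hd']
          exact WTrace.cons Relation.ReflTransGen.refl hs h2
        · have hm₂ := step_none_verdict hτ rfl
          have hvm := wtrace_verdict hw hm₂
          subst hvm
          exact tauStar_wtrace hv _ (Relation.ReflTransGen.single hτ)
      · have h2 := verdict_step hver hs
        subst h2
        have h3 := wtrace_verdict hw hver
        subst h3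
        exact tauStar_wtrace hv _ ht

/-- `{s | WTrace m s v}` for a verdict `v`. -/
private def Lang (v m : Mon Act) : Set (List Act) := {s | WTrace m s v}

private lemma range_prefix {j J : ℕ} (h : j ≤ J) : List.range j <+: List.range J := by
  obtain ⟨d, rfl⟩ := Nat.exists_eq_add_of_le h
  exact ⟨_, List.range_add.symm⟩

private lemma omegaCl_subset {v : Mon Act} (hv : IsVerdict v) {m n : Mon Act}
    (hfin : (Lang v m \ Lang v n).Finite) : omegaCl (Lang v m) ⊆ omegaCl (Lang v n) := by
  intro w hw
  obtain ⟨k, hk⟩ := hw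
  by_contra hB
  have hall : ∀ j, (List.range (k + j)).map w ∈ Lang v m \ Lang v n := by
    intro j
    refine ⟨wtrace_prefix hv hk ((range_prefix (Nat.le_add_right k j)).map w), ?_⟩
    intro hmem
    exact hB ⟨k + j, hmem⟩
  have hinj : Function.Injective (fun j : ℕ => (List.range (k + j)).map w) := by
    intro i j hij
    have := congrArg List.length hij
    simpa using this
  exact Set.infinite_of_injective_forall_mem hinj hall hfin

private lemma lang_diff_small {v : Mon Act} (hv : IsVerdict v) [Nonempty Act] (m n : Mon Act)
    (hω : omegaCl (Lang v m) ⊆ omegaCl (Lang v n)) :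
    Lang v m \ Lang v n ⊆ {s : List Act | s.length < depth n} := by
  intro s hs
  obtain ⟨hsA, hsB⟩ := hs
  by_contra hlen
  have hlen : depth n ≤ s.length := by simpa using hlen
  apply hsB
  set a₀ : Act := Classical.arbitrary Act
  set w : ℕ → Act := fun j => s.getD j a₀ with hwdef
  have hpre : (List.range s.length).map w = s := by
    apply List.ext_getElem
    · simp
    · intro i h1 h2
      simp [hwdef, List.getD_eq_getElem?_getD, List.getElem?_eq_getElem h2]
  have hwmem : w ∈ omegaCl (Lang v m) := ⟨s.length, by rw [hpre]; exact hsA⟩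
  obtain ⟨k, hk⟩ := hω hwmem
  have hk2 : ((List.range k).map w).take (depth n) ∈ Lang v n := wtrace_take hv _ _ hk
  have heq : ((List.range k).map w).take (depth n) = (List.range (min (depth n) k)).map w := by
    rw [← List.map_take, List.take_range]
  rw [heq] at hk2
  refine wtrace_prefix hv hk2 ?_
  rw [← hpre]
  exact (range_prefix (le_trans (min_le_left _ _) hlen)).map w

end Aux

/-- over a finite nonempty alphabet, two closed monitors are
ω-verdict equivalent iff their acceptance and rejection languages differ on
only finitely many finite traces. -/
theorem stmt19 [Fintype Act] [Nonempty Act] (m n : Mon Act)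
    (hm : Closed m) (hn : Closed n) :
    OmegaEq m n ↔ (symmDiff (La m) (La n) ∪ symmDiff (Lr m) (Lr n)).Finite := by
  have hLa : La m = Lang Mon.yes m ∧ La n = Lang Mon.yes n := ⟨rfl, rfl⟩
  have hLr : Lr m = Lang Mon.no m ∧ Lr n = Lang Mon.no n := ⟨rfl, rfl⟩
  constructor
  · intro hω
    obtain ⟨hωa, hωr⟩ := hω
    have hbig : (symmDiff (La m) (La n) ∪ symmDiff (Lr m) (Lr n)) ⊆
        {s : List Act | s.length ≤ max (depth m) (depth n)} := by
      have h1 := lang_diff_small IsVerdict.yes m n (le_of_eq hωa)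
      have h2 := lang_diff_small IsVerdict.yes n m (ge_of_eq hωa)
      have h3 := lang_diff_small IsVerdict.no m n (le_of_eq hωr)
      have h4 := lang_diff_small IsVerdict.no n m (ge_of_eq hωr)
      intro s hs
      rcases hs with hs | hs <;> rw [Set.mem_symmDiff] at hs <;>
        rcases hs with ⟨h5, h6⟩ | ⟨h5, h6⟩
      · have := h1 ⟨h5, h6⟩; simp only [Set.mem_setOf_eq] at this ⊢; omega
      · have := h2 ⟨h5, h6⟩; simp only [Set.mem_setOf_eq] at this ⊢; omega
      · have := h3 ⟨h5, h6⟩; simp only [Set.mem_setOf_eq] at this ⊢; omega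
      · have := h4 ⟨h5, h6⟩; simp only [Set.mem_setOf_eq] at this ⊢; omega
    exact (List.finite_length_le Act (max (depth m) (depth n))).subset hbig
  · intro hfin
    have key : ∀ (v : Mon Act), IsVerdict v → (Lang v m \ Lang v n).Finite →
        (Lang v n \ Lang v m).Finite → omegaCl (Lang v m) = omegaCl (Lang v n) :=
      fun v hv h1 h2 =>
        Set.Subset.antisymm (omegaCl_subset hv h1) (omegaCl_subset hv h2)
    constructor
    · exact key Mon.yes IsVerdict.yes
        (hfin.subset fun s hs => Or.inl (Set.mem_symmDiff.2 (Or.inl hs)))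
        (hfin.subset fun s hs => Or.inl (Set.mem_symmDiff.2 (Or.inr hs)))
    · exact key Mon.no IsVerdict.no
        (hfin.subset fun s hs => Or.inr (Set.mem_symmDiff.2 (Or.inl hs)))
        (hfin.subset fun s hs => Or.inr (Set.mem_symmDiff.2 (Or.inr hs)))
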